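/- The Newton polytope of a product of Laurent polynomials f₁⋯fₙ (with all fᵢ nonzero) equals the Minkowski sum of the Newton polytopes of f₁,…,fₙ. -/

import Mathlib

/-- A Laurent polynomial in `n` variables: an element of the monoid algebra of `ℂ`
over the lattice `ℤⁿ` of exponents; its value at `k` is the coefficient of `tᵏ`. -/
noncomputable abbrev MvLaurent (n : ℕ) := AddMonoidAlgebra ℂ (Fin n → ℤ)

/-- The Newton polytope of a Laurent polynomial: the convex hull in ℝⁿ of its
exponents with nonzero coefficient. -/
noncomputable def newtonPolytope {n : ℕ} (f : MvLaurent n) : Set (Fin n → ℝ) :=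
  convexHull ℝ ((fun k : Fin n → ℤ => fun i => (k i : ℝ)) '' ↑f.coeff.support)

open Pointwise

private lemma cmap_inj {n : ℕ} :
    Function.Injective (fun k : Fin n → ℤ => fun i => (k i : ℝ)) := by
  intro a b h
  funext i
  have : ((a i : ℝ)) = (b i : ℝ) := congrFun h i
  exact_mod_cast this

private lemma cmap_add {n : ℕ} (a b : Fin n → ℤ) :
    (fun i => ((a + b) i : ℝ)) = (fun i => (a i : ℝ)) + fun i => (b i : ℝ) := by
  funext i; simp

private lemma cmap_image_add {n : ℕ} (S T : Set (Fin n → ℤ)) :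
    (fun k : Fin n → ℤ => fun i => (k i : ℝ)) '' (S + T) =
      (fun k : Fin n → ℤ => fun i => (k i : ℝ)) '' S +
      (fun k : Fin n → ℤ => fun i => (k i : ℝ)) '' T := by
  ext v
  constructor
  · rintro ⟨k, ⟨a, ha, b, hb, rfl⟩, rfl⟩
    exact ⟨_, ⟨a, ha, rfl⟩, _, ⟨b, hb, rfl⟩, (cmap_add a b).symm⟩
  · rintro ⟨x, ⟨a, ha, rfl⟩, y, ⟨b, hb, rfl⟩, rfl⟩
    exact ⟨a + b, ⟨a, ha, b, hb, rfl⟩, cmap_add a b⟩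

theorem newtonPolytope_mul {n : ℕ} (f g : MvLaurent n) :
    newtonPolytope (f * g) = newtonPolytope f + newtonPolytope g := by
  classical
  set c : (Fin n → ℤ) → (Fin n → ℝ) := fun k i => (k i : ℝ) with hc
  set A : Set (Fin n → ℝ) := c '' ↑f.coeff.support with hA
  set B : Set (Fin n → ℝ) := c '' ↑g.coeff.support with hB
  have hS : convexHull ℝ A + convexHull ℝ B = convexHull ℝ (A + B) :=
    (convexHull_add A B).symm
  apply Set.Subset.antisymm
  · calc newtonPolytope (f * g)
        ⊆ convexHull ℝ (c '' ↑(f.coeff.support + g.coeff.support)) := by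
          refine convexHull_mono (Set.image_mono ?_)
          exact_mod_cast AddMonoidAlgebra.support_coeff_mul_subset f g
      _ = convexHull ℝ (A + B) := by rw [Finset.coe_add, cmap_image_add]
      _ = _ := hS.symm
  · have hABfin : (A + B).Finite :=
      Set.Finite.add (f.coeff.support.finite_toSet.image c) (g.coeff.support.finite_toSet.image c)
    have hScomp : IsCompact (convexHull ℝ A + convexHull ℝ B) := by
      rw [hS]; exact hABfin.isCompact_convexHull ℝ
    have hSconv : Convex ℝ (convexHull ℝ A + convexHull ℝ B) := by
      rw [hS]; exact convex_convexHull ℝ _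
    have hext : (convexHull ℝ A + convexHull ℝ B).extremePoints ℝ ⊆
        c '' ↑(f * g).coeff.support := by
      intro v hv
      obtain ⟨x, hx, y, hy, hxy⟩ := hv.1
      have hxy : x + y = v := hxy
      -- uniqueness of the decomposition of v
      have huniq : ∀ x' ∈ convexHull ℝ A, ∀ y' ∈ convexHull ℝ B,
          x' + y' = v → x' = x ∧ y' = y := by
        intro x' hx' y' hy' h'
        have h1 : v ∈ openSegment ℝ (x + y') (x' + y) := by
          refine ⟨1/2, 1/2, one_half_pos, one_half_pos, by norm_num, ?_⟩
          funext i
          have h'i := congrFun h' i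
          have hxyi := congrFun hxy i
          simp only [Pi.add_apply, Pi.smul_apply, smul_eq_mul] at *
          linarith
        have h2 := (mem_extremePoints.1 hv).2 _ ⟨x, hx, y', hy', rfl⟩ _ ⟨x', hx', y, hy, rfl⟩ h1
        constructor
        · exact add_right_cancel (show x' + y = x + y by rw [show x' + y = v from h2.2, ← hxy])
        · exact add_left_cancel (show x + y' = x + y by rw [show x + y' = v from h2.1, ← hxy])
      -- x is an extreme point of convexHull A, hence in A
      have hxA : x ∈ A := by
        refine extremePoints_convexHull_subset (⟨hx, ?_⟩ : x ∈ (convexHull ℝ A).extremePoints ℝ)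
        intro u hu w hw hseg
        obtain ⟨a, b, ha, hb, hab, habx⟩ := hseg
        have hvseg : v ∈ openSegment ℝ (u + y) (w + y) := by
          refine ⟨a, b, ha, hb, hab, ?_⟩
          funext i
          have h1 := congrFun habx i
          have h2 := congrFun hxy i
          simp only [Pi.add_apply, Pi.smul_apply, smul_eq_mul] at *
          linear_combination h1 + y i * hab + h2
        have h2 := hv.2 ⟨u, hu, y, hy, rfl⟩ ⟨w, hw, y, hy, rfl⟩ hvseg
        exact add_right_cancel (show u + y = x + y by rw [show u + y = v from h2, ← hxy])
      have hyB : y ∈ B := by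
        refine extremePoints_convexHull_subset (⟨hy, ?_⟩ : y ∈ (convexHull ℝ B).extremePoints ℝ)
        intro u hu w hw hseg
        obtain ⟨a, b, ha, hb, hab, haby⟩ := hseg
        have hvseg : v ∈ openSegment ℝ (x + u) (x + w) := by
          refine ⟨a, b, ha, hb, hab, ?_⟩
          funext i
          have h1 := congrFun haby i
          have h2 := congrFun hxy i
          simp only [Pi.add_apply, Pi.smul_apply, smul_eq_mul] at *
          linear_combination h1 + x i * hab + h2
        have h2 := hv.2 ⟨x, hx, u, hu, rfl⟩ ⟨x, hx, w, hw, rfl⟩ hvseg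
        exact add_left_cancel (show x + u = x + y by rw [show x + u = v from h2, ← hxy])
      obtain ⟨k₁, hk₁, hk₁e⟩ := hxA
      obtain ⟨k₂, hk₂, hk₂e⟩ := hyB
      have hk₁s : k₁ ∈ f.coeff.support := hk₁
      have hk₂s : k₂ ∈ g.coeff.support := hk₂
      -- the coefficient of f*g at k₁ + k₂
      have hcoeff : (f * g).coeff (k₁ + k₂) = f.coeff k₁ * g.coeff k₂ := by
        rw [AddMonoidAlgebra.coeff_mul, Finsupp.sum, Finset.sum_eq_single k₁]
        · rw [Finsupp.sum, Finset.sum_eq_single k₂]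
          · rw [if_pos rfl]
          · intro a2 _ hne
            rw [if_neg]
            intro hsum
            exact hne (add_left_cancel hsum)
          · intro h; exact absurd hk₂s h
        · intro a1 ha1 hne
          rw [Finsupp.sum]
          apply Finset.sum_eq_zero
          intro a2 ha2
          rw [if_neg]
          intro hsum
          have hca : c a1 + c a2 = v := by
            rw [← hxy, ← hk₁e, ← hk₂e, ← cmap_add, ← cmap_add, hsum]
          have := (huniq (c a1) (subset_convexHull ℝ A ⟨a1, ha1, rfl⟩)
            (c a2) (subset_convexHull ℝ B ⟨a2, ha2, rfl⟩) hca).1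
          rw [← hk₁e] at this
          exact hne (cmap_inj this)
        · intro h; exact absurd hk₁s h
      have hne : (f * g).coeff (k₁ + k₂) ≠ 0 := by
        rw [hcoeff]
        exact mul_ne_zero (Finsupp.mem_support_iff.mp hk₁s) (Finsupp.mem_support_iff.mp hk₂s)
      exact ⟨k₁ + k₂, Finsupp.mem_support_iff.mpr hne, by
        rw [show c (k₁ + k₂) = c k₁ + c k₂ from cmap_add k₁ k₂, hk₁e, hk₂e, hxy]⟩
    calc convexHull ℝ A + convexHull ℝ B
        = closure (convexHull ℝ ((convexHull ℝ A + convexHull ℝ B).extremePoints ℝ)) :=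
          (closure_convexHull_extremePoints hScomp hSconv).symm
      _ = convexHull ℝ ((convexHull ℝ A + convexHull ℝ B).extremePoints ℝ) := by
          refine IsClosed.closure_eq (Set.Finite.isClosed_convexHull ℝ ?_)
          refine hABfin.subset ?_
          rw [hS]
          exact extremePoints_convexHull_subset
      _ ⊆ newtonPolytope (f * g) := convexHull_mono hext

theorem newtonPolytope_one {n : ℕ} : newtonPolytope (1 : MvLaurent n) = 0 := by
  unfold newtonPolytope
  rw [AddMonoidAlgebra.one_def, AddMonoidAlgebra.coeff_single, Finsupp.support_single_ne_zero _ one_ne_zero]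
  simp only [Finset.coe_singleton, Set.image_singleton, convexHull_singleton]
  ext v
  simp [funext_iff, eq_comm]

open Pointwise in
/-- The Newton polytope of a product of nonzero Laurent polynomials equals the
Minkowski sum of their Newton polytopes. -/
theorem newtonPolytope_prod {n N : ℕ} (f : Fin N → MvLaurent n)
    (hf : ∀ i, f i ≠ 0) :
    newtonPolytope (∏ i, f i) = ∑ i, newtonPolytope (f i) := by
  induction N with
  | zero => simp [newtonPolytope_one]
  | succ N ih =>
      rw [Fin.prod_univ_succ, Fin.sum_univ_succ, newtonPolytope_mul,
        ih (fun i => f i.succ) (fun i => hf _)]
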